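/- (Local improvement) Let w : E → ℝ be admissible and suppose F ∈ 𝓕(k) is not of minimal w-weight in 𝓕(k). Then there exist e ∈ F and g ∈ E \ F such that F − e + g = (F \ {e}) ∪ {g} ∈ 𝓕(k) and w(e) > w(g); moreover e can be chosen ≼-maximal in F and g can be chosen ≼-minimal in E \ F. -/

import Mathlib

/-- `f : 2^R → ℕ` is submodular if `f (U ∪ V) + f (U ∩ V) ≤ f U + f V` for all `U, V ⊆ R`. -/
def Submodular {R : Type*} [DecidableEq R] (f : Finset R → ℕ) : Prop :=
  ∀ U V : Finset R, f (U ∪ V) + f (U ∩ V) ≤ f U + f V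

/-- An integral polymatroid rank function: submodular, monotone and normalized. -/
def IsPolymatroidRank {R : Type*} [DecidableEq R] (f : Finset R → ℕ) : Prop :=
  Submodular f ∧ (∀ U V : Finset R, U ⊆ V → f U ≤ f V) ∧ f ∅ = 0

/-- The ground set `E`: the disjoint union of the chains `K_r`, where the chain `K_r` has
`u_r = f({r})` elements, represented by `Fin (f {r})` (ordered by the order of `Fin`);
two elements are comparable iff they lie in the same chain. -/
abbrev Ground {R : Type*} [DecidableEq R] (f : Finset R → ℕ) : Type _ :=
  Σ r : R, Fin (f {r})

/-- The partial order `≼` on `E`: `x ≼ y` iff `x` and `y` lie in the same chain and `x` is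
below or equal to `y` there. -/
def PrecEq {R : Type*} [DecidableEq R] (f : Finset R → ℕ) (x y : Ground f) : Prop :=
  x.1 = y.1 ∧ x.2.val ≤ y.2.val

/-- `F ⊆ E` is an ideal of the poset `P = (E, ≼)`. -/
def IsIdeal {R : Type*} [DecidableEq R] (f : Finset R → ℕ) (F : Finset (Ground f)) : Prop :=
  ∀ (r : R) (i j : Fin (f {r})), i ≤ j → (⟨r, j⟩ : Ground f) ∈ F → (⟨r, i⟩ : Ground f) ∈ F

/-- The family `𝓕` of ideals `F` of `P` with `|F ∩ ⋃_{r∈U} K_r| ≤ f U` for all `U ⊆ R`. -/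
def MemF {R : Type*} [Fintype R] [DecidableEq R] (f : Finset R → ℕ)
    (F : Finset (Ground f)) : Prop :=
  IsIdeal f F ∧ ∀ U : Finset R, (F.filter fun e => e.1 ∈ U).card ≤ f U

/-- The family `𝓕(k)` of members of `𝓕` of cardinality `k`. -/
def MemFk {R : Type*} [Fintype R] [DecidableEq R] (f : Finset R → ℕ) (k : ℕ)
    (F : Finset (Ground f)) : Prop :=
  MemF f F ∧ F.card = k

/-- A weight function `w : E → ℝ` is admissible if `e ≼ g` implies `w e ≤ w g`. -/
def Admissible {R : Type*} [DecidableEq R] (f : Finset R → ℕ) (w : Ground f → ℝ) : Prop :=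
  ∀ (r : R) (i j : Fin (f {r})), i ≤ j → w ⟨r, i⟩ ≤ w ⟨r, j⟩

/-- `F` is of minimal `w`-weight in `𝓕(k)`. -/
def MinWeight {R : Type*} [Fintype R] [DecidableEq R] (f : Finset R → ℕ) (k : ℕ)
    (w : Ground f → ℝ) (F : Finset (Ground f)) : Prop :=
  MemFk f k F ∧ ∀ F' : Finset (Ground f), MemFk f k F' → ∑ e ∈ F, w e ≤ ∑ e ∈ F', w e

open Finset
set_option linter.unusedSectionVars false

section
variable {R : Type*} [Fintype R] [DecidableEq R] (f : Finset R → ℕ)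

/-- downward closed subsets of `Fin n` are initial segments -/
lemma fin_dc {n : ℕ} (S : Finset (Fin n))
    (h : ∀ i j : Fin n, i ≤ j → j ∈ S → i ∈ S) (i : Fin n) :
    i ∈ S ↔ i.val < S.card := by
  constructor
  · intro hi
    have hsub : Finset.Iic i ⊆ S := fun j hj => h j i (Finset.mem_Iic.mp hj) hi
    have := Finset.card_le_card hsub
    rw [Fin.card_Iic] at this; omega
  · intro hi
    by_contra hmem
    have hsub : S ⊆ Finset.Iio i := by
      intro j hj
      rw [Finset.mem_Iio]
      by_contra hij
      exact hmem (h i j (le_of_not_gt hij) hj)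
    have := Finset.card_le_card hsub
    rw [Fin.card_Iio] at this; omega

def cnt (F : Finset (Ground f)) (r : R) : ℕ := (F.filter fun e => e.1 = r).card

def InP (x : R → ℕ) : Prop := ∀ U : Finset R, ∑ r ∈ U, x r ≤ f U

lemma cnt_eq_card_fiber (F : Finset (Ground f)) (r : R) :
    cnt f F r = (Finset.univ.filter fun i : Fin (f {r}) => (⟨r, i⟩ : Ground f) ∈ F).card := by
  unfold cnt
  rw [show (F.filter fun e => e.1 = r)
      = (Finset.univ.filter fun i : Fin (f {r}) => (⟨r, i⟩ : Ground f) ∈ F).image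
          (fun i => (⟨r, i⟩ : Ground f)) from ?_]
  · rw [Finset.card_image_of_injective _ sigma_mk_injective]
  · ext e
    simp only [Finset.mem_filter, Finset.mem_image, Finset.mem_univ, true_and]
    constructor
    · rintro ⟨he, h1⟩
      obtain ⟨e1, e2⟩ := e
      cases h1
      exact ⟨e2, he, rfl⟩
    · rintro ⟨i, hi, rfl⟩
      exact ⟨hi, rfl⟩

lemma mem_iff_lt_cnt {F : Finset (Ground f)} (hF : IsIdeal f F) (r : R) (i : Fin (f {r})) :
    (⟨r, i⟩ : Ground f) ∈ F ↔ i.val < cnt f F r := by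
  rw [cnt_eq_card_fiber]
  have := fin_dc (Finset.univ.filter fun i : Fin (f {r}) => (⟨r, i⟩ : Ground f) ∈ F)
    (fun i j hij hj => by
      simp only [Finset.mem_filter, Finset.mem_univ, true_and] at hj ⊢
      exact hF r i j hij hj) i
  simpa using this

lemma filter_card_eq_sum (F : Finset (Ground f)) (U : Finset R) :
    (F.filter fun e => e.1 ∈ U).card = ∑ r ∈ U, cnt f F r := by
  rw [Finset.card_eq_sum_card_fiberwise
    (f := fun e : Ground f => e.1) (s := F.filter fun e => e.1 ∈ U) (t := U)
    (fun e he => (Finset.mem_filter.mp he).2)]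
  refine Finset.sum_congr rfl fun r hr => ?_
  unfold cnt
  rw [Finset.filter_filter]
  congr 1
  apply Finset.filter_congr
  intro e _
  constructor
  · rintro ⟨_, h⟩; exact h
  · rintro rfl; exact ⟨hr, rfl⟩

lemma card_eq_sum_cnt (F : Finset (Ground f)) : F.card = ∑ r, cnt f F r := by
  rw [← filter_card_eq_sum]
  congr 1
  simp

lemma inP_cnt {F : Finset (Ground f)} (hF : MemF f F) : InP f (cnt f F) := by
  intro U
  rw [← filter_card_eq_sum]
  exact hF.2 U

end
section
variable {R : Type*} [Fintype R] [DecidableEq R] (f : Finset R → ℕ)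
set_option linter.unusedSectionVars false

def idealOf (x : R → ℕ) : Finset (Ground f) :=
  Finset.univ.filter fun e => e.2.val < x e.1

lemma mem_idealOf {x : R → ℕ} {r : R} {i : Fin (f {r})} :
    (⟨r, i⟩ : Ground f) ∈ idealOf f x ↔ i.val < x r := by
  simp [idealOf]

lemma idealOf_isIdeal (x : R → ℕ) : IsIdeal f (idealOf f x) := by
  intro r i j hij hj
  rw [mem_idealOf] at hj ⊢
  exact lt_of_le_of_lt hij hj

lemma card_filter_val_lt {n m : ℕ} (h : m ≤ n) :
    (Finset.univ.filter fun i : Fin n => i.val < m).card = m := by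
  rw [← Finset.card_range m]
  refine Finset.card_bij' (fun (i : Fin n) _ => i.val)
    (fun j hj => (⟨j, lt_of_lt_of_le (Finset.mem_range.mp hj) h⟩ : Fin n)) ?_ ?_ ?_ ?_
  · intro a ha
    simp only [Finset.mem_filter] at ha
    simpa using ha.2
  · intro b hb
    simp only [Finset.mem_filter, Finset.mem_univ, true_and]
    simpa using Finset.mem_range.mp hb
  · intro a _; rfl
  · intro b _; rfl

lemma cnt_idealOf (x : R → ℕ) (hx : ∀ r, x r ≤ f {r}) (r : R) :
    cnt f (idealOf f x) r = x r := by
  rw [cnt_eq_card_fiber]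
  have : (Finset.univ.filter fun i : Fin (f {r}) => (⟨r, i⟩ : Ground f) ∈ idealOf f x)
      = Finset.univ.filter fun i : Fin (f {r}) => i.val < x r := by
    apply Finset.filter_congr
    intro i _
    rw [mem_idealOf]
  rw [this, card_filter_val_lt (hx r)]

lemma inP_singleton {x : R → ℕ} (hx : InP f x) (r : R) : x r ≤ f {r} := by
  have := hx {r}
  simpa using this

lemma memF_idealOf (x : R → ℕ) (hx : InP f x) : MemF f (idealOf f x) := by
  refine ⟨idealOf_isIdeal f x, fun U => ?_⟩
  rw [filter_card_eq_sum]
  calc ∑ r ∈ U, cnt f (idealOf f x) r = ∑ r ∈ U, x r := by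
        refine Finset.sum_congr rfl fun r _ => cnt_idealOf f x (inP_singleton f hx) r
    _ ≤ f U := hx U

lemma card_idealOf (x : R → ℕ) (hx : InP f x) : (idealOf f x).card = ∑ r, x r := by
  rw [card_eq_sum_cnt]
  exact Finset.sum_congr rfl fun r _ => cnt_idealOf f x (inP_singleton f hx) r

end
section
variable {R : Type*} [Fintype R] [DecidableEq R] (f : Finset R → ℕ)
set_option linter.unusedSectionVars false
set_option maxHeartbeats 1000000

lemma exchange (hf : IsPolymatroidRank f) {x y : R → ℕ} (hx : InP f x) (hy : InP f y)
    (hsum : ∑ t, x t = ∑ t, y t) {r : R} (hr : y r < x r) :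
    ∃ s, x s < y s ∧ r ≠ s ∧
      InP f (Function.update (Function.update x r (x r - 1)) s (x s + 1)) ∧
      InP f (Function.update (Function.update y r (y r + 1)) s (y s - 1)) := by
  classical
  have key : ∀ (v : R → ℕ), InP f v → ∀ A B : Finset R,
      (∑ t ∈ A, v t = f A) → (∑ t ∈ B, v t = f B) →
      (∑ t ∈ A ∪ B, v t = f (A ∪ B)) ∧ (∑ t ∈ A ∩ B, v t = f (A ∩ B)) := by
    intro v hv A B hA hB
    have h1 := hv (A ∪ B)
    have h2 := hv (A ∩ B)
    have h3 := hf.1 A B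
    have h4 : ∑ t ∈ A ∪ B, v t + ∑ t ∈ A ∩ B, v t = ∑ t ∈ A, v t + ∑ t ∈ B, v t :=
      Finset.sum_union_inter
    omega
  set 𝒜 := Finset.univ.filter (fun U : Finset R => (∑ t ∈ U, x t = f U) ∧ r ∉ U) with h𝒜
  set A := 𝒜.sup id with hAdef
  have hAprop : (∑ t ∈ A, x t = f A) ∧ r ∉ A := by
    rw [hAdef]
    apply Finset.sup_induction (p := fun (U : Finset R) => (∑ t ∈ U, x t = f U) ∧ r ∉ U)
    · exact ⟨by simpa using hf.2.2.symm, by simp⟩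
    · rintro U ⟨hU1, hU2⟩ V ⟨hV1, hV2⟩
      refine ⟨(key x hx U V hU1 hV1).1, ?_⟩
      intro hmem
      rcases Finset.mem_union.mp hmem with h | h
      · exact hU2 h
      · exact hV2 h
    · intro U hU
      simpa [h𝒜] using (Finset.mem_filter.mp hU).2
  have hAmax : ∀ U : Finset R, (∑ t ∈ U, x t = f U) → r ∉ U → U ⊆ A := by
    intro U h1 h2
    have hU : U ∈ 𝒜 := by
      rw [h𝒜, Finset.mem_filter]
      exact ⟨Finset.mem_univ U, h1, h2⟩
    exact Finset.le_sup (f := id) hU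
  -- find the pivot s
  have hs : ∃ s, x s < y s ∧ s ∉ A ∧
      (∀ U : Finset R, (∑ t ∈ U, y t = f U) → r ∈ U → s ∈ U) := by
    by_contra hcon
    push_neg at hcon
    set N := Finset.univ.filter (fun s => x s < y s ∧ s ∉ A) with hNdef
    by_cases hN : N.Nonempty
    · -- build the intersection of tight sets
      have hcon' : ∀ s : R, ∃ U : Finset R,
          (x s < y s ∧ s ∉ A) → ((∑ t ∈ U, y t = f U) ∧ r ∈ U ∧ s ∉ U) := by
        intro s
        by_cases h : x s < y s ∧ s ∉ A
        · obtain ⟨U, hU1, hU2, hU3⟩ := hcon s h.1 h.2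
          exact ⟨U, fun _ => ⟨hU1, hU2, hU3⟩⟩
        · exact ⟨∅, fun h' => absurd h' h⟩
      choose g hg using hcon'
      have hinf : ∀ (M : Finset R) (hM : M.Nonempty),
          (∀ s ∈ M, (∑ t ∈ g s, y t = f (g s)) ∧ r ∈ g s) →
          ((∑ t ∈ M.inf' hM g, y t = f (M.inf' hM g)) ∧ r ∈ M.inf' hM g) := by
        intro M hM
        induction hM using Finset.Nonempty.cons_induction with
        | singleton a =>
            intro h
            simpa [Finset.inf'_singleton] using h a (by simp)
        | cons a s ha hs ih =>
            intro h
            rw [Finset.inf'_cons hs]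
            have h1 := h a (Finset.mem_cons_self a s)
            have h2 := ih (fun t ht => h t (Finset.mem_cons.mpr (Or.inr ht)))
            have hkey := (key y hy (g a) (s.inf' hs g) h1.1 h2.1).2
            constructor
            · rw [Finset.inf_eq_inter]; exact hkey
            · rw [Finset.inf_eq_inter]; exact Finset.mem_inter.mpr ⟨h1.2, h2.2⟩
      have hNprop : ∀ s ∈ N, (∑ t ∈ g s, y t = f (g s)) ∧ r ∈ g s ∧ s ∉ g s := by
        intro s hsN
        rw [hNdef, Finset.mem_filter] at hsN
        exact hg s hsN.2
      set B := N.inf' hN g with hBdef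
      have hB := hinf N hN (fun s hsN => ⟨(hNprop s hsN).1, (hNprop s hsN).2.1⟩)
      have hsnotB : ∀ s ∈ N, s ∉ B := by
        intro s hsN hsB
        exact (hNprop s hsN).2.2 (Finset.inf'_le g hsN hsB)
      -- counting contradiction on B \ A
      have hrC : r ∈ B \ A := Finset.mem_sdiff.mpr ⟨hB.2, hAprop.2⟩
      have hposC : ∀ t ∈ B \ A, y t ≤ x t := by
        intro t htC
        by_contra h
        push_neg at h
        have htN : t ∈ N := by
          rw [hNdef, Finset.mem_filter]
          exact ⟨Finset.mem_univ t, h, (Finset.mem_sdiff.mp htC).2⟩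
        exact hsnotB t htN (Finset.mem_sdiff.mp htC).1
      have hlt : ∑ t ∈ B \ A, y t < ∑ t ∈ B \ A, x t :=
        Finset.sum_lt_sum hposC ⟨r, hrC, hr⟩
      -- submodular counting
      have hsub := hf.1 A B
      have hxu := hx (A ∪ B)
      have hyi := hy (A ∩ B)
      have d1 : ∑ t ∈ A ∪ B, x t = ∑ t ∈ A, x t + ∑ t ∈ B \ A, x t := by
        rw [← Finset.union_sdiff_self_eq_union, Finset.sum_union Finset.disjoint_sdiff]
      have d2 : ∑ t ∈ B, y t = ∑ t ∈ A ∩ B, y t + ∑ t ∈ B \ A, y t := by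
        rw [← Finset.sum_union (Finset.disjoint_left.mpr
          (by intro a ha hb; simp only [Finset.mem_inter, Finset.mem_sdiff] at ha hb; tauto))]
        congr 1
        ext t
        simp only [Finset.mem_union, Finset.mem_inter, Finset.mem_sdiff]
        tauto
      have hAt := hAprop.1
      rw [← hBdef] at hB
      have hBt := hB.1
      omega
    · -- N = ∅ : every s with x s < y s lies in A
      rw [Finset.not_nonempty_iff_eq_empty] at hN
      have hallA : ∀ s, x s < y s → s ∈ A := by
        intro s hlt
        by_contra hsA
        have : s ∈ N := by rw [hNdef, Finset.mem_filter]; exact ⟨Finset.mem_univ s, hlt, hsA⟩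
        rw [hN] at this
        exact absurd this (Finset.notMem_empty s)
      have hrC : r ∈ Finset.univ \ A := Finset.mem_sdiff.mpr ⟨Finset.mem_univ r, hAprop.2⟩
      have hposC : ∀ t ∈ Finset.univ \ A, y t ≤ x t := by
        intro t htC
        by_contra h
        push_neg at h
        exact (Finset.mem_sdiff.mp htC).2 (hallA t h)
      have hlt : ∑ t ∈ Finset.univ \ A, y t < ∑ t ∈ Finset.univ \ A, x t :=
        Finset.sum_lt_sum hposC ⟨r, hrC, hr⟩
      have d1 : ∑ t ∈ (Finset.univ : Finset R), x t = ∑ t ∈ A, x t + ∑ t ∈ Finset.univ \ A, x t := by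
        rw [← Finset.sum_union Finset.disjoint_sdiff]
        congr 1
        simp
      have d2 : ∑ t ∈ (Finset.univ : Finset R), y t = ∑ t ∈ A, y t + ∑ t ∈ Finset.univ \ A, y t := by
        rw [← Finset.sum_union Finset.disjoint_sdiff]
        congr 1
        simp
      have hyA := hy A
      have hAt := hAprop.1
      omega
  obtain ⟨s, hs1, hs2, hs3⟩ := hs
  have hrs : r ≠ s := by intro h; rw [h] at hr; omega
  refine ⟨s, hs1, hrs, ?_, ?_⟩
  · -- InP for x - e_r + e_s
    intro U
    by_cases hsU : s ∈ U <;> by_cases hrU : r ∈ U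
    · rw [Finset.sum_update_of_mem hsU]
      have hrU' : r ∈ U \ {s} := by
        rw [Finset.mem_sdiff, Finset.mem_singleton]; exact ⟨hrU, hrs⟩
      rw [Finset.sum_update_of_mem hrU']
      have e1 : ∑ t ∈ U, x t = x s + ∑ t ∈ U \ {s}, x t := by
        rw [Finset.sdiff_singleton_eq_erase, ← Finset.add_sum_erase _ x hsU]
      have e2 : ∑ t ∈ U \ {s}, x t = x r + ∑ t ∈ (U \ {s}) \ {r}, x t := by
        rw [Finset.sdiff_singleton_eq_erase (s := U \ {s}), ← Finset.add_sum_erase _ x hrU']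
      have := hx U
      omega
    · rw [Finset.sum_update_of_mem hsU]
      have hrU' : r ∉ U \ {s} := by
        rw [Finset.mem_sdiff]; tauto
      rw [Finset.sum_update_of_notMem hrU']
      have e1 : ∑ t ∈ U, x t = x s + ∑ t ∈ U \ {s}, x t := by
        rw [Finset.sdiff_singleton_eq_erase, ← Finset.add_sum_erase _ x hsU]
      have hne : ∑ t ∈ U, x t ≠ f U := by
        intro htight
        exact hs2 (hAmax U htight hrU hsU)
      have := hx U
      omega
    · rw [Finset.sum_update_of_notMem hsU, Finset.sum_update_of_mem hrU]
      have e1 : ∑ t ∈ U, x t = x r + ∑ t ∈ U \ {r}, x t := by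
        rw [Finset.sdiff_singleton_eq_erase, ← Finset.add_sum_erase _ x hrU]
      have := hx U
      omega
    · rw [Finset.sum_update_of_notMem hsU, Finset.sum_update_of_notMem hrU]
      exact hx U
  · -- InP for y + e_r - e_s
    have hys : 1 ≤ y s := by omega
    intro U
    by_cases hsU : s ∈ U <;> by_cases hrU : r ∈ U
    · rw [Finset.sum_update_of_mem hsU]
      have hrU' : r ∈ U \ {s} := by
        rw [Finset.mem_sdiff, Finset.mem_singleton]; exact ⟨hrU, hrs⟩
      rw [Finset.sum_update_of_mem hrU']
      have e1 : ∑ t ∈ U, y t = y s + ∑ t ∈ U \ {s}, y t := by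
        rw [Finset.sdiff_singleton_eq_erase, ← Finset.add_sum_erase _ y hsU]
      have e2 : ∑ t ∈ U \ {s}, y t = y r + ∑ t ∈ (U \ {s}) \ {r}, y t := by
        rw [Finset.sdiff_singleton_eq_erase (s := U \ {s}), ← Finset.add_sum_erase _ y hrU']
      have := hy U
      omega
    · rw [Finset.sum_update_of_mem hsU]
      have hrU' : r ∉ U \ {s} := by
        rw [Finset.mem_sdiff]; tauto
      rw [Finset.sum_update_of_notMem hrU']
      have e1 : ∑ t ∈ U, y t = y s + ∑ t ∈ U \ {s}, y t := by
        rw [Finset.sdiff_singleton_eq_erase, ← Finset.add_sum_erase _ y hsU]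
      have := hy U
      omega
    · rw [Finset.sum_update_of_notMem hsU, Finset.sum_update_of_mem hrU]
      have e1 : ∑ t ∈ U, y t = y r + ∑ t ∈ U \ {r}, y t := by
        rw [Finset.sdiff_singleton_eq_erase, ← Finset.add_sum_erase _ y hrU]
      have hne : ∑ t ∈ U, y t ≠ f U := by
        intro htight
        exact hsU (hs3 U htight hrU)
      have := hy U
      omega
    · rw [Finset.sum_update_of_notMem hsU, Finset.sum_update_of_notMem hrU]
      exact hy U

end
section
variable {R : Type*} [Fintype R] [DecidableEq R] (f : Finset R → ℕ) (w : Ground f → ℝ)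
set_option linter.unusedSectionVars false
set_option maxHeartbeats 1000000

noncomputable def wfun (r : R) (i : ℕ) : ℝ := if h : i < f {r} then w ⟨r, ⟨i, h⟩⟩ else 0

noncomputable def W (x : R → ℕ) : ℝ := ∑ r, ∑ i ∈ Finset.range (x r), wfun f w r i

lemma sum_split {M : Type*} [AddCommMonoid M] (g : R → M) {r s : R} (hrs : r ≠ s) :
    ∑ t, g t = g r + g s + ∑ t ∈ (Finset.univ.erase r).erase s, g t := by
  rw [← Finset.add_sum_erase _ g (Finset.mem_univ r),
      ← Finset.add_sum_erase _ g (Finset.mem_erase.mpr ⟨hrs.symm, Finset.mem_univ s⟩),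
      ← add_assoc]

lemma sum_filter_val_lt {n m : ℕ} (hm : m ≤ n) (g : Fin n → ℝ) :
    ∑ i ∈ Finset.univ.filter (fun i : Fin n => i.val < m), g i
      = ∑ j ∈ Finset.range m, (if h : j < n then g ⟨j, h⟩ else 0) := by
  refine Finset.sum_bij' (fun (i : Fin n) _ => i.val)
    (fun j hj => (⟨j, lt_of_lt_of_le (Finset.mem_range.mp hj) hm⟩ : Fin n)) ?_ ?_ ?_ ?_ ?_
  · intro a ha
    simp only [Finset.mem_filter] at ha
    simpa using ha.2
  · intro b hb
    simp only [Finset.mem_filter, Finset.mem_univ, true_and]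
    simpa using Finset.mem_range.mp hb
  · intro a _; rfl
  · intro b _; rfl
  · intro a _
    rw [dif_pos a.isLt]

lemma W_eq (F : Finset (Ground f)) (hI : IsIdeal f F) (hc : ∀ r, cnt f F r ≤ f {r}) :
    ∑ e ∈ F, w e = W f w (cnt f F) := by
  rw [← Finset.sum_fiberwise F (fun e : Ground f => e.1) w]
  unfold W
  refine Finset.sum_congr rfl fun r _ => ?_
  have himg : (F.filter fun e => e.1 = r)
      = (Finset.univ.filter fun i : Fin (f {r}) => (⟨r, i⟩ : Ground f) ∈ F).image
          (fun i => (⟨r, i⟩ : Ground f)) := by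
    ext e
    simp only [Finset.mem_filter, Finset.mem_image, Finset.mem_univ, true_and]
    constructor
    · rintro ⟨he, h1⟩
      obtain ⟨e1, e2⟩ := e
      cases h1
      exact ⟨e2, he, rfl⟩
    · rintro ⟨i, hi, rfl⟩
      exact ⟨hi, rfl⟩
  rw [himg, Finset.sum_image (fun a _ b _ h => sigma_mk_injective h)]
  have hfe : (Finset.univ.filter fun i : Fin (f {r}) => (⟨r, i⟩ : Ground f) ∈ F)
      = Finset.univ.filter fun i : Fin (f {r}) => i.val < cnt f F r := by
    apply Finset.filter_congr
    intro i _
    exact mem_iff_lt_cnt f hI r i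
  rw [hfe, sum_filter_val_lt (hc r) (fun i => w ⟨r, i⟩)]
  rfl

lemma W_update {x : R → ℕ} {r s : R} (hrs : r ≠ s) (a b : ℕ) :
    W f w (Function.update (Function.update x r a) s b)
      = W f w x - ∑ i ∈ Finset.range (x r), wfun f w r i
        - ∑ i ∈ Finset.range (x s), wfun f w s i
        + ∑ i ∈ Finset.range a, wfun f w r i + ∑ i ∈ Finset.range b, wfun f w s i := by
  unfold W
  rw [sum_split (g := fun t => ∑ i ∈ Finset.range (Function.update (Function.update x r a) s b t),
        wfun f w t i) hrs,
      sum_split (g := fun t => ∑ i ∈ Finset.range (x t), wfun f w t i) hrs]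
  have h1 : Function.update (Function.update x r a) s b r = a := by
    rw [Function.update_of_ne hrs, Function.update_self]
  have h2 : Function.update (Function.update x r a) s b s = b := Function.update_self _ _ _
  have htail : ∑ t ∈ (Finset.univ.erase r).erase s,
        ∑ i ∈ Finset.range (Function.update (Function.update x r a) s b t), wfun f w t i
      = ∑ t ∈ (Finset.univ.erase r).erase s, ∑ i ∈ Finset.range (x t), wfun f w t i := by
    refine Finset.sum_congr rfl fun t ht => ?_
    have h3 := Finset.mem_erase.mp ht
    have h4 := Finset.mem_erase.mp h3.2
    rw [Function.update_of_ne h3.1, Function.update_of_ne h4.1]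
  simp only [h1, h2]
  rw [htail]
  ring

lemma improve (hf : IsPolymatroidRank f) (hw : Admissible f w) {x : R → ℕ} (hx : InP f x) :
    ∀ (n : ℕ) (y : R → ℕ), (∑ t, ((x t : ℤ) - y t).natAbs) ≤ n → InP f y →
      (∑ t, y t = ∑ t, x t) → W f w y < W f w x →
      ∃ (r s : R) (h1 : 1 ≤ x r) (hfr : x r - 1 < f {r}) (hfs : x s < f {s}),
        r ≠ s ∧
        InP f (Function.update (Function.update x r (x r - 1)) s (x s + 1)) ∧
        w ⟨s, ⟨x s, hfs⟩⟩ < w ⟨r, ⟨x r - 1, hfr⟩⟩ := by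
  intro n
  induction n with
  | zero =>
    intro y hm hy hsum hW
    exfalso
    have hall : ∀ t, ((x t : ℤ) - y t).natAbs = 0 := by
      intro t
      exact Finset.sum_eq_zero_iff.mp (Nat.le_zero.mp hm) t (Finset.mem_univ t)
    have : y = x := funext fun t => by have := hall t; omega
    rw [this] at hW
    exact lt_irrefl _ hW
  | succ n ih =>
    intro y hm hy hsum hW
    have hex : ∃ r, y r < x r := by
      by_contra hcon
      push_neg at hcon
      have heq : y = x := by
        funext t
        by_contra hne
        have : ∑ t, x t < ∑ t, y t :=
          Finset.sum_lt_sum (fun t _ => hcon t)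
            ⟨t, Finset.mem_univ t, lt_of_le_of_ne (hcon t) (fun h => hne h.symm)⟩
        omega
      rw [heq] at hW
      exact lt_irrefl _ hW
    obtain ⟨r, hr⟩ := hex
    obtain ⟨s, hs1, hrs, hxP', hyP'⟩ := exchange f hf hx hy hsum.symm hr
    have hfr : x r - 1 < f {r} := by have := inP_singleton f hx r; omega
    have hfs : x s < f {s} := by have := inP_singleton f hy s; omega
    by_cases hcmp : w ⟨s, ⟨x s, hfs⟩⟩ < w ⟨r, ⟨x r - 1, hfr⟩⟩
    · exact ⟨r, s, by omega, hfr, hfs, hrs, hxP', hcmp⟩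
    · push_neg at hcmp
      set y' := Function.update (Function.update y r (y r + 1)) s (y s - 1) with hy'def
      have hys1 : 1 ≤ y s := by omega
      have hWy' : W f w y' = W f w y + wfun f w r (y r) - wfun f w s (y s - 1) := by
        rw [hy'def, W_update f w hrs]
        have e1 : ∑ i ∈ Finset.range (y r + 1), wfun f w r i
            = ∑ i ∈ Finset.range (y r), wfun f w r i + wfun f w r (y r) :=
          Finset.sum_range_succ _ _
        have e2 : ∑ i ∈ Finset.range (y s), wfun f w s i
            = ∑ i ∈ Finset.range (y s - 1), wfun f w s i + wfun f w s (y s - 1) := by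
          conv_lhs => rw [show y s = (y s - 1) + 1 by omega]
          exact Finset.sum_range_succ _ _
        rw [e1, e2]
        ring
      have c1 : wfun f w r (y r) ≤ wfun f w r (x r - 1) := by
        unfold wfun
        rw [dif_pos hfr, dif_pos (show y r < f {r} by omega)]
        exact hw r ⟨y r, by omega⟩ ⟨x r - 1, hfr⟩ (by simp only [Fin.mk_le_mk]; omega)
      have c2 : wfun f w s (x s) ≤ wfun f w s (y s - 1) := by
        unfold wfun
        rw [dif_pos hfs, dif_pos (show y s - 1 < f {s} by have := inP_singleton f hy s; omega)]
        exact hw s ⟨x s, hfs⟩ ⟨y s - 1, by have := inP_singleton f hy s; omega⟩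
          (by simp only [Fin.mk_le_mk]; omega)
      have c3 : wfun f w r (x r - 1) ≤ wfun f w s (x s) := by
        unfold wfun
        rw [dif_pos hfr, dif_pos hfs]
        exact hcmp
      have hWlt : W f w y' < W f w x := by rw [hWy']; linarith
      have hy'r : y' r = y r + 1 := by rw [hy'def, Function.update_of_ne hrs, Function.update_self]
      have hy's : y' s = y s - 1 := by rw [hy'def]; exact Function.update_self _ _ _
      have hy'other : ∀ t, t ≠ r → t ≠ s → y' t = y t := by
        intro t h1 h2
        rw [hy'def, Function.update_of_ne h2, Function.update_of_ne h1]
      have hmeas : ∑ t, ((x t : ℤ) - y' t).natAbs ≤ n := by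
        have hless : ∑ t, ((x t : ℤ) - y' t).natAbs < ∑ t, ((x t : ℤ) - y t).natAbs := by
          apply Finset.sum_lt_sum
          · intro t _
            by_cases h1 : t = r
            · subst h1; rw [hy'r]; omega
            by_cases h2 : t = s
            · subst h2; rw [hy's]; omega
            · rw [hy'other t h1 h2]
          · exact ⟨r, Finset.mem_univ r, by rw [hy'r]; omega⟩
        omega
      have hsum' : ∑ t, y' t = ∑ t, x t := by
        have e1 : ∑ t, y' t = y' r + y' s + ∑ t ∈ (Finset.univ.erase r).erase s, y' t :=
          sum_split y' hrs
        have e2 : ∑ t, y t = y r + y s + ∑ t ∈ (Finset.univ.erase r).erase s, y t :=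
          sum_split y hrs
        have e3 : ∑ t ∈ (Finset.univ.erase r).erase s, y' t
            = ∑ t ∈ (Finset.univ.erase r).erase s, y t := by
          refine Finset.sum_congr rfl fun t ht => ?_
          have h3 := Finset.mem_erase.mp ht
          have h4 := Finset.mem_erase.mp h3.2
          exact hy'other t h4.1 h3.1
        rw [e1, hy'r, hy's, e3]
        omega
      exact ih y' hmeas hyP' hsum' hWlt

end

set_option maxHeartbeats 1000000 in
/-- (Local improvement) If `F ∈ 𝓕(k)` is not of minimal `w`-weight for an admissible `w`,
then there is a local improvement step `F → (F \ {e}) ∪ {g} ∈ 𝓕(k)` with `w e > w g`, where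
`e` can be chosen `≼`-maximal in `F` and `g` can be chosen `≼`-minimal in `E \ F`. -/
theorem local_improvement
    {R : Type*} [Fintype R] [Nonempty R] [DecidableEq R]
    (f : Finset R → ℕ) (hf : IsPolymatroidRank f)
    (w : Ground f → ℝ) (hw : Admissible f w)
    (k : ℕ) (F : Finset (Ground f)) (hF : MemFk f k F)
    (hnotmin : ¬ MinWeight f k w F) :
    ∃ e ∈ F, ∃ g : Ground f, g ∉ F ∧
      MemFk f k (insert g (F.erase e)) ∧ w g < w e ∧
      (∀ j : Fin (f {e.1}), (⟨e.1, j⟩ : Ground f) ∈ F → j ≤ e.2) ∧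
      (∀ j : Fin (f {g.1}), (⟨g.1, j⟩ : Ground f) ∉ F → g.2 ≤ j) := by
  classical
  obtain ⟨hFm, hFcard⟩ := hF
  have hex : ∃ F₁, MemFk f k F₁ ∧ ∑ e ∈ F₁, w e < ∑ e ∈ F, w e := by
    by_contra hcon
    push_neg at hcon
    exact hnotmin ⟨⟨hFm, hFcard⟩, fun F' hF' => hcon F' hF'⟩
  obtain ⟨F₁, hF₁, hlt⟩ := hex
  set x := cnt f F with hxdef
  set y := cnt f F₁ with hydef
  have hxP : InP f x := inP_cnt f hFm
  have hyP : InP f y := inP_cnt f hF₁.1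
  have hWx : ∑ e ∈ F, w e = W f w x := W_eq f w F hFm.1 (fun r => inP_singleton f hxP r)
  have hWy : ∑ e ∈ F₁, w e = W f w y := W_eq f w F₁ hF₁.1.1 (fun r => inP_singleton f hyP r)
  have hsx : ∑ t, x t = k := by
    have := card_eq_sum_cnt f F
    rw [← hxdef] at this
    omega
  have hsy : ∑ t, y t = k := by
    have := card_eq_sum_cnt f F₁
    rw [← hydef] at this
    have h2 := hF₁.2
    omega
  have hW : W f w y < W f w x := by rw [← hWx, ← hWy]; exact hlt
  obtain ⟨r, s, h1, hfr, hfs, hrs, hxP', hwlt⟩ :=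
    improve f w hf hw hxP (∑ t, ((x t : ℤ) - y t).natAbs) y le_rfl hyP (by omega) hW
  set x' := Function.update (Function.update x r (x r - 1)) s (x s + 1) with hx'def
  have hx'r : x' r = x r - 1 := by
    rw [hx'def, Function.update_of_ne hrs, Function.update_self]
  have hx's : x' s = x s + 1 := by rw [hx'def]; exact Function.update_self _ _ _
  have hx'other : ∀ t, t ≠ r → t ≠ s → x' t = x t := by
    intro t ht1 ht2
    rw [hx'def, Function.update_of_ne ht2, Function.update_of_ne ht1]
  have heF : (⟨r, ⟨x r - 1, hfr⟩⟩ : Ground f) ∈ F := by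
    rw [mem_iff_lt_cnt f hFm.1 r ⟨x r - 1, hfr⟩, ← hxdef]
    show x r - 1 < x r
    omega
  have hgF : (⟨s, ⟨x s, hfs⟩⟩ : Ground f) ∉ F := by
    rw [mem_iff_lt_cnt f hFm.1 s ⟨x s, hfs⟩, ← hxdef]
    show ¬ (x s < x s)
    omega
  refine ⟨⟨r, ⟨x r - 1, hfr⟩⟩, heF, ⟨s, ⟨x s, hfs⟩⟩, hgF, ?_, hwlt, ?_, ?_⟩
  · -- MemFk of the swap
    have ground_mk_eq_iff : ∀ {r' : R} {i : Fin (f {r'})} {s' : R} {j : Fin (f {s'})},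
        ((⟨r', i⟩ : Ground f) = ⟨s', j⟩) ↔ (r' = s' ∧ i.val = j.val) := by
      intro r' i s' j
      constructor
      · intro h
        obtain ⟨h1, h2⟩ := Sigma.mk.inj_iff.mp h
        subst h1
        exact ⟨rfl, congrArg Fin.val (eq_of_heq h2)⟩
      · rintro ⟨rfl, hv⟩
        exact congrArg (Sigma.mk r') (Fin.ext hv)
    have hFeq : insert (⟨s, ⟨x s, hfs⟩⟩ : Ground f) (F.erase ⟨r, ⟨x r - 1, hfr⟩⟩)
        = idealOf f x' := by
      ext a
      obtain ⟨a1, a2⟩ := a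
      have hmem := mem_iff_lt_cnt f hFm.1 a1 a2
      rw [← hxdef] at hmem
      rw [Finset.mem_insert, Finset.mem_erase, mem_idealOf, hmem, Ne,
        ground_mk_eq_iff, ground_mk_eq_iff]
      simp only [Fin.val_mk]
      by_cases has : a1 = s
      · subst has
        rw [hx's]
        constructor
        · rintro (⟨-, h⟩ | ⟨-, h⟩) <;> omega
        · intro h
          rcases Nat.lt_or_ge (a2 : ℕ) (x a1) with hlt2 | hge
          · exact Or.inr ⟨fun hc => hrs hc.1.symm, hlt2⟩
          · exact Or.inl ⟨rfl, by omega⟩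
      · by_cases har : a1 = r
        · subst har
          rw [hx'r]
          constructor
          · rintro (⟨h, -⟩ | ⟨hne, h2⟩)
            · exact absurd h has
            · have h3 : ¬((a2 : ℕ) = x a1 - 1) := fun hc => hne ⟨rfl, hc⟩
              omega
          · intro h
            exact Or.inr ⟨fun hc => absurd hc.2 (by omega), by omega⟩
        · rw [hx'other a1 har has]
          constructor
          · rintro (⟨h, -⟩ | ⟨-, h⟩)
            · exact absurd h has
            · exact h
          · intro h
            exact Or.inr ⟨fun hc => har hc.1, h⟩
    rw [hFeq]
    refine ⟨memF_idealOf f x' hxP', ?_⟩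
    rw [card_idealOf f x' hxP']
    have e1 : ∑ t, x' t = x' r + x' s + ∑ t ∈ (Finset.univ.erase r).erase s, x' t :=
      sum_split x' hrs
    have e2 : ∑ t, x t = x r + x s + ∑ t ∈ (Finset.univ.erase r).erase s, x t :=
      sum_split x hrs
    have e3 : ∑ t ∈ (Finset.univ.erase r).erase s, x' t
        = ∑ t ∈ (Finset.univ.erase r).erase s, x t := by
      refine Finset.sum_congr rfl fun t ht => ?_
      have h3 := Finset.mem_erase.mp ht
      have h4 := Finset.mem_erase.mp h3.2
      exact hx'other t h4.1 h3.1
    rw [e1, hx'r, hx's, e3]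
    omega
  · -- maximality of e
    intro j hj
    have := (mem_iff_lt_cnt f hFm.1 r j).mp hj
    rw [← hxdef] at this
    show j.val ≤ x r - 1
    omega
  · -- minimality of g
    intro j hj
    show x s ≤ j.val
    by_contra hc
    push_neg at hc
    exact hj ((mem_iff_lt_cnt f hFm.1 s j).mpr (by rw [← hxdef]; exact hc))
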